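/- arXiv:1012.4992 — 3 statements merged into one kernel-verified Lean document; each statement's English description precedes it below -/
import Mathlib

section
/- Let U be an update procedure of countable ordinal α ≥ 1 and define g : ℕ → ℕ by: g x = y if there exists i with U(U^(i)) = (0, x, y) and i is the least element of {n : ∃z, U(U^(n)) = (0, x, z)}, and g x = 0 if no such i exists. If U_g has a U_g-generated finite zero, then U has a U-generated finite zero (Reduction Lemma, successor case, part 2). -/
/-- Transfinite sequences of functions are modeled as functions on all ordinals;
an update procedure of ordinal `α` only depends on (and only updates) the
entries with index below `α`, and a "sequence of ordinal `β`" is read off from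
its entries with index below `β`. -/
abbrev OSeq := Ordinal → ℕ → ℕ

/-- `U` is an update procedure of ordinal `α`. -/
def IsUpdateProc (α : Ordinal) (U : OSeq → Option (Ordinal × ℕ × ℕ)) : Prop :=
  (∀ f : OSeq, ∃ A : Finset (Ordinal × ℕ), (∀ p ∈ A, p.1 < α) ∧
      ∀ g : OSeq, (∀ p ∈ A, g p.1 p.2 = f p.1 p.2) → U g = U f) ∧
  (∀ (f : OSeq) (β : Ordinal) (n m : ℕ), U f = some (β, n, m) → β < α) ∧
  (∀ (f g : OSeq) (β : Ordinal) (n m i j : ℕ),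
      (∀ γ, γ < β → f γ = g γ) →
      U f = some (β, n, m) → g β n = m → U g = some (β, i, j) → i ≠ n)

/-- A sequence is finite (below `α`) if it has nonzero values in only
finitely many places. -/
def OFinite (α : Ordinal) (f : OSeq) : Prop :=
  Set.Finite {p : Ordinal × ℕ | p.1 < α ∧ f p.1 p.2 ≠ 0}

/-- Controlled update `f ⊕ u`: update the `γ`-th function at `n` to value `m`
and erase (reset to `0`) everything of higher index. -/
noncomputable def oplus (f : OSeq) : Option (Ordinal × ℕ × ℕ) → OSeq
  | none => f
  | some (γ, n, m) => fun β x =>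
      if β < γ then f β x
      else if β = γ then (if x = n then m else f β x)
      else 0

/-- The learning process generated by `U`:
`U^(0)` is the constantly `0` sequence and `U^(i+1) = U^(i) ⊕ U(U^(i))`. -/
noncomputable def learnProc (U : OSeq → Option (Ordinal × ℕ × ℕ)) : ℕ → OSeq
  | 0 => fun _ _ => 0
  | i + 1 => oplus (learnProc U i) (U (learnProc U i))

/-- `f` is `U`-generated. -/
def IsGenerated (U : OSeq → Option (Ordinal × ℕ × ℕ)) (f : OSeq) : Prop :=
  ∃ i : ℕ, f = learnProc U i

/-- Concatenation `g * f` of a sequence `g` of ordinal `β` with a sequence `f`: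
entries below `β` come from `g`, higher entries from `f` (shifted by `β`). -/
noncomputable def concatSeq (β : Ordinal) (g f : OSeq) : OSeq :=
  fun δ => if δ < β then g δ else f (δ - β)

/-- The shifted procedure `U_g` (for `g` a sequence of ordinal `β`):
`U_g f = (γ,n,m)` if `U (g * f) = (β + γ, n, m)`, and `U_g f = ∅` otherwise. -/
noncomputable def shiftU (U : OSeq → Option (Ordinal × ℕ × ℕ)) (β : Ordinal)
    (g : OSeq) : OSeq → Option (Ordinal × ℕ × ℕ) :=
  fun f =>
    match U (concatSeq β g f) with
    | none => none
    | some (δ, n, m) => if β ≤ δ then some (δ - β, n, m) else none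

/-- The constantly zero sequence. -/
def zeroSeq : OSeq := fun _ _ => 0

section Aux

variable (U : OSeq → Option (Ordinal × ℕ × ℕ))

lemma oplus_none' (f : OSeq) : oplus f none = f := rfl

lemma oplus_some' (f : OSeq) (γ : Ordinal) (n m : ℕ) (β : Ordinal) (x : ℕ) :
    oplus f (some (γ, n, m)) β x =
      if β < γ then f β x else if β = γ then (if x = n then m else f β x) else 0 := rfl

lemma learnProc_succ' (i : ℕ) :
    learnProc U (i + 1) = oplus (learnProc U i) (U (learnProc U i)) := rfl

lemma learnProc_finite (α : Ordinal) : ∀ i, OFinite α (learnProc U i) := by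
  intro i
  induction i with
  | zero =>
    have : {p : Ordinal × ℕ | p.1 < α ∧ learnProc U 0 p.1 p.2 ≠ 0} = ∅ := by
      ext p; simp [learnProc]
    rw [OFinite, this]; exact Set.finite_empty
  | succ i ih =>
    rw [OFinite, learnProc_succ']
    rcases h : U (learnProc U i) with _ | ⟨γ, n, m⟩
    · rw [oplus_none']; exact ih
    · apply Set.Finite.subset (ih.union (Set.finite_singleton (γ, n)))
      rintro ⟨β, x⟩ ⟨hp1, hp2⟩
      rw [oplus_some'] at hp2
      by_cases h1 : β < γ
      · rw [if_pos h1] at hp2; exact Or.inl ⟨hp1, hp2⟩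
      · rw [if_neg h1] at hp2
        by_cases h2 : β = γ
        · rw [if_pos h2] at hp2
          by_cases h3 : x = n
          · right; simp [h2, h3]
          · rw [if_neg h3] at hp2; exact Or.inl ⟨hp1, hp2⟩
        · rw [if_neg h2] at hp2; exact absurd rfl hp2

lemma setAt {i n m : ℕ} (h : U (learnProc U i) = some (0, n, m)) :
    learnProc U (i + 1) 0 n = m := by
  rw [learnProc_succ', h, oplus_some']
  simp

lemma zeroAbove {i n m : ℕ} (h : U (learnProc U i) = some (0, n, m)) :
    ∀ δ : Ordinal, δ ≠ 0 → ∀ x, learnProc U (i + 1) δ x = 0 := by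
  intro δ hδ x
  rw [learnProc_succ', h, oplus_some']
  rw [if_neg (not_lt_zero (a := δ)), if_neg hδ]

lemma step_keep {l n : ℕ} (hno : ∀ m, U (learnProc U l) ≠ some (0, n, m)) :
    learnProc U (l + 1) 0 n = learnProc U l 0 n := by
  rw [learnProc_succ']
  rcases h : U (learnProc U l) with _ | ⟨γ, n', m⟩
  · rfl
  · rw [oplus_some']
    by_cases hγ : γ = 0
    · subst hγ
      have hn' : n ≠ n' := by rintro rfl; exact hno m h
      simp [hn']
    · rw [if_pos (pos_iff_ne_zero.2 hγ)]

lemma persist0 {i n : ℕ} :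
    ∀ d : ℕ, (∀ l, i ≤ l → l < i + d → ∀ m, U (learnProc U l) ≠ some (0, n, m)) →
    learnProc U (i + d) 0 n = learnProc U i 0 n := by
  intro d
  induction d with
  | zero => intro _; rfl
  | succ d ih =>
    intro h
    have h2 : learnProc U ((i + d) + 1) 0 n = learnProc U (i + d) 0 n :=
      step_keep U (h (i + d) (by omega) (by omega))
    have h1 := ih (fun l hl1 hl2 => h l hl1 (by omega))
    have he : i + (d + 1) = (i + d) + 1 := rfl
    rw [he, h2, h1]

end Aux

section Aux2

variable (U : OSeq → Option (Ordinal × ℕ × ℕ)) {α : Ordinal} {g : ℕ → ℕ}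

/-- The defining property of `g` (hypothesis `hg` of the main theorem). -/
def GSpec (U : OSeq → Option (Ordinal × ℕ × ℕ)) (g : ℕ → ℕ) : Prop :=
  ∀ x : ℕ,
    (∃ i : ℕ, U (learnProc U i) = some (0, x, g x) ∧
      ∀ j < i, ∀ z : ℕ, U (learnProc U j) ≠ some (0, x, z))
    ∨ (g x = 0 ∧ ∀ i : ℕ, ∀ z : ℕ, U (learnProc U i) ≠ some (0, x, z))

/-- Every level-0 update in the run of `U` assigns the value `g n`. -/
lemma updVal (hU : IsUpdateProc α U) (hg : GSpec U g) :
    ∀ {i n m : ℕ}, U (learnProc U i) = some (0, n, m) → m = g n := by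
  intro i n m h
  classical
  rcases hg n with ⟨i₀, h₀, hmin⟩ | ⟨_, hnone⟩
  · rcases lt_trichotomy i i₀ with hlt | heq | hgt
    · exact absurd h (hmin i hlt m)
    · subst heq
      rw [h₀] at h
      simp only [Option.some.injEq, Prod.mk.injEq, true_and] at h
      omega
    · exfalso
      have hT : ∃ j, i₀ < j ∧ ∃ m', U (learnProc U j) = some (0, n, m') :=
        ⟨i, hgt, m, h⟩
      obtain ⟨hi'gt, m'', h''⟩ := Nat.find_spec hT
      set i' := Nat.find hT with hi'def
      have hval : learnProc U i' 0 n = g n := by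
        have hstart : learnProc U (i₀ + 1) 0 n = g n := setAt U h₀
        have heq : (i₀ + 1) + (i' - (i₀ + 1)) = i' := by omega
        have hper := persist0 U (i := i₀ + 1) (n := n) (i' - (i₀ + 1)) ?_
        · rw [heq] at hper; rw [hper, hstart]
        · intro l hl1 hl2 m' hm'
          have hl3 : l < i' := by omega
          exact (Nat.find_min hT hl3) ⟨by omega, m', hm'⟩
      exact (hU.2.2 (learnProc U i₀) (learnProc U i') 0 n (g n) n m''
        (fun γ hγ => absurd hγ (not_lt_zero (a := γ))) h₀ hval h'') rfl
  · exact absurd h (hnone i m)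

lemma persistVal (hU : IsUpdateProc α U) (hg : GSpec U g) {i n : ℕ}
    (h : learnProc U i 0 n = g n) : ∀ d, learnProc U (i + d) 0 n = g n := by
  intro d
  induction d with
  | zero => exact h
  | succ d ih =>
    have he : i + (d + 1) = (i + d) + 1 := rfl
    rw [he]
    by_cases hupd : ∃ m, U (learnProc U (i + d)) = some (0, n, m)
    · obtain ⟨m, hm⟩ := hupd
      rw [setAt U hm]
      exact updVal U hU hg hm
    · push_neg at hupd
      rw [step_keep U hupd]
      exact ih

/-- If no level-0 update at `n` happens from stage `j` on, the value at stage
`j` is already `g n`. -/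
lemma goodNoUpd (hU : IsUpdateProc α U) (hg : GSpec U g) {n j : ℕ}
    (h : ∀ l, j ≤ l → ∀ m, U (learnProc U l) ≠ some (0, n, m)) :
    learnProc U j 0 n = g n := by
  rcases hg n with ⟨i₀, h₀, _⟩ | ⟨hg0, hnever⟩
  · have hij : i₀ < j := by
      by_contra hc
      push_neg at hc
      exact h i₀ hc (g n) h₀
    have h1 : learnProc U (i₀ + 1) 0 n = g n := setAt U h₀
    have h2 := persistVal U hU hg h1 (j - (i₀ + 1))
    rwa [show (i₀ + 1) + (j - (i₀ + 1)) = j from by omega] at h2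
  · have h0 := persist0 U (i := 0) (n := n) j (fun l _ _ m hm => hnever l m hm)
    rw [show (0 : ℕ) + j = j from by omega] at h0
    rw [h0, hg0]
    rfl

end Aux2

section Aux3

/-- case lemmas for `shiftU` -/
lemma shiftU_of_none (U : OSeq → Option (Ordinal × ℕ × ℕ)) (β : Ordinal) (gg f : OSeq)
    (h : U (concatSeq β gg f) = none) : shiftU U β gg f = none := by
  unfold shiftU; rw [h]

lemma shiftU_of_some (U : OSeq → Option (Ordinal × ℕ × ℕ)) (β : Ordinal) (gg f : OSeq)
    (δ : Ordinal) (n m : ℕ) (h : U (concatSeq β gg f) = some (δ, n, m)) (hβ : β ≤ δ) :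
    shiftU U β gg f = some (δ - β, n, m) := by
  unfold shiftU; rw [h]; exact if_pos hβ

lemma shiftU_of_low (U : OSeq → Option (Ordinal × ℕ × ℕ)) (β : Ordinal) (gg f : OSeq)
    (δ : Ordinal) (n m : ℕ) (h : U (concatSeq β gg f) = some (δ, n, m)) (hβ : ¬ β ≤ δ) :
    shiftU U β gg f = none := by
  unfold shiftU; rw [h]; exact if_neg hβ

/-- The shifted procedure `U_g`, its run `fj`, and the concatenated sequences `sj`. -/
noncomputable def Ushift (U : OSeq → Option (Ordinal × ℕ × ℕ)) (g : ℕ → ℕ) :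
    OSeq → Option (Ordinal × ℕ × ℕ) := shiftU U 1 (fun _ => g)

noncomputable def fj (U : OSeq → Option (Ordinal × ℕ × ℕ)) (g : ℕ → ℕ) (j : ℕ) : OSeq :=
  learnProc (Ushift U g) j

noncomputable def sj (U : OSeq → Option (Ordinal × ℕ × ℕ)) (g : ℕ → ℕ) (j : ℕ) : OSeq :=
  concatSeq 1 (fun _ => g) (fj U g j)

lemma sj_zero (U : OSeq → Option (Ordinal × ℕ × ℕ)) (g : ℕ → ℕ) (j : ℕ) (x : ℕ) :
    sj U g j 0 x = g x := by
  unfold sj concatSeq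
  rw [if_pos (zero_lt_one)]

lemma sj_high (U : OSeq → Option (Ordinal × ℕ × ℕ)) (g : ℕ → ℕ) (j : ℕ) {δ : Ordinal}
    (hδ : 1 ≤ δ) (x : ℕ) : sj U g j δ x = fj U g j (δ - 1) x := by
  unfold sj concatSeq
  rw [if_neg (not_lt.2 hδ)]

lemma Ushift_none (U : OSeq → Option (Ordinal × ℕ × ℕ)) (g : ℕ → ℕ) (j : ℕ)
    (h : U (sj U g j) = none) : Ushift U g (fj U g j) = none :=
  shiftU_of_none U 1 (fun _ => g) (fj U g j) h

lemma Ushift_some (U : OSeq → Option (Ordinal × ℕ × ℕ)) (g : ℕ → ℕ) (j : ℕ)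
    (δ : Ordinal) (n m : ℕ) (h : U (sj U g j) = some (δ, n, m)) (hδ : (1:Ordinal) ≤ δ) :
    Ushift U g (fj U g j) = some (δ - 1, n, m) :=
  shiftU_of_some U 1 (fun _ => g) (fj U g j) δ n m h hδ

lemma Ushift_low (U : OSeq → Option (Ordinal × ℕ × ℕ)) (g : ℕ → ℕ) (j : ℕ)
    (δ : Ordinal) (n m : ℕ) (h : U (sj U g j) = some (δ, n, m)) (hδ : ¬ (1:Ordinal) ≤ δ) :
    Ushift U g (fj U g j) = none :=
  shiftU_of_low U 1 (fun _ => g) (fj U g j) δ n m h hδ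

lemma fj_succ (U : OSeq → Option (Ordinal × ℕ × ℕ)) (g : ℕ → ℕ) (j : ℕ) :
    fj U g (j + 1) = oplus (fj U g j) (Ushift U g (fj U g j)) := rfl

end Aux3

/-- Reduction Lemma (successor case, part 2): let `U` be an update procedure of
countable ordinal `α ≥ 1` and let `g : ℕ → ℕ` be defined by `g x = y` if
`U (U^(i)) = (0, x, y)` for the least `i` such that `U (U^(i))` is an update at
`(0, x)`, and `g x = 0` if there is no such `i`. If `U_g` has a `U_g`-generated
finite zero, then `U` has a `U`-generated finite zero. -/
theorem reduction_lemma_successor_part2 (α : Ordinal) (hα : 1 ≤ α)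
    (hcount : α.card ≤ Cardinal.aleph0)
    (U : OSeq → Option (Ordinal × ℕ × ℕ)) (hU : IsUpdateProc α U)
    (g : ℕ → ℕ)
    (hg : ∀ x : ℕ,
      (∃ i : ℕ, U (learnProc U i) = some (0, x, g x) ∧
        ∀ j < i, ∀ z : ℕ, U (learnProc U j) ≠ some (0, x, z))
      ∨ (g x = 0 ∧ ∀ i : ℕ, ∀ z : ℕ, U (learnProc U i) ≠ some (0, x, z)))
    (hz : ∃ f : OSeq, IsGenerated (shiftU U 1 (fun _ => g)) f ∧
      OFinite (α - 1) f ∧ shiftU U 1 (fun _ => g) f = none) :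
    ∃ f : OSeq, IsGenerated U f ∧ OFinite α f ∧ U f = none := by
  classical
  have hgs : GSpec U g := hg
  by_contra hcon
  push_neg at hcon
  have hrun : ∀ i, U (learnProc U i) ≠ none := fun i =>
    hcon (learnProc U i) ⟨i, rfl⟩ (learnProc_finite U α i)
  obtain ⟨f0, ⟨k, hk⟩, _, hz0⟩ := hz
  have hex : ∃ k, Ushift U g (fj U g k) = none := ⟨k, by rw [hk] at hz0; exact hz0⟩
  set k₀ := Nat.find hex with hk₀def
  have hk₀ : Ushift U g (fj U g k₀) = none := Nat.find_spec hex
  have hltk : ∀ j, j < k₀ → Ushift U g (fj U g j) ≠ none := fun j hj => Nat.find_min hex hj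
  -- continuity data for the sequences `sj U g j`
  have hA : ∀ j : ℕ, ∃ A : Finset (Ordinal × ℕ), (∀ p ∈ A, p.1 < α) ∧
      ∀ g' : OSeq, (∀ p ∈ A, g' p.1 p.2 = sj U g j p.1 p.2) → U g' = U (sj U g j) :=
    fun j => hU.1 (sj U g j)
  choose Ac hAc1 hAc2 using hA
  set Afin : Finset ℕ :=
    (Finset.range (k₀ + 1)).biUnion (fun j => (Ac j).image Prod.snd) with hAfin
  have hmemA : ∀ j, j ≤ k₀ → ∀ p ∈ Ac j, p.2 ∈ Afin := by
    intro j hj p hp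
    rw [hAfin]
    exact Finset.mem_biUnion.2
      ⟨j, Finset.mem_range.2 (by omega), Finset.mem_image_of_mem _ hp⟩
  -- eventual goodness of each level-0 position
  have hevn : ∀ n : ℕ, ∃ e : ℕ, ∀ j, e ≤ j → learnProc U j 0 n = g n := by
    intro n
    rcases hgs n with ⟨i₀, h₀, _⟩ | ⟨hg0, hnever⟩
    · refine ⟨i₀ + 1, fun j hj => ?_⟩
      have h1 : learnProc U (i₀ + 1) 0 n = g n := setAt U h₀
      have h2 := persistVal U hU hgs h1 (j - (i₀ + 1))
      rwa [show (i₀ + 1) + (j - (i₀ + 1)) = j from by omega] at h2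
    · exact ⟨0, fun j _ => goodNoUpd U hU hgs (fun l _ m hm => hnever l m hm)⟩
  choose E hE using hevn
  set i₁ := Afin.sup E with hi₁def
  have hgood₁ : ∀ n ∈ Afin, ∀ j, i₁ ≤ j → learnProc U j 0 n = g n := fun n hn j hj =>
    hE n j (le_trans (Finset.le_sup hn) hj)
  -- choose the starting stage of the simulation
  have hstart : ∃ start : ℕ, (∀ δ : Ordinal, δ ≠ 0 → ∀ x, learnProc U start δ x = 0) ∧
      (∀ j, start ≤ j → ∀ n ∈ Afin, learnProc U j 0 n = g n) := by
    by_cases hB : ∃ i, i₁ ≤ i ∧ ∃ n m, U (learnProc U i) = some (0, n, m)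
    · obtain ⟨i, hi1, n, m, hupd⟩ := hB
      exact ⟨i + 1, zeroAbove U hupd, fun j hj n' hn' => hgood₁ n' hn' j (by omega)⟩
    · push_neg at hB
      by_cases hA' : ∃ i, ∃ n m, U (learnProc U i) = some (0, n, m)
      · obtain ⟨i, n, m, hupd⟩ := hA'
        have hilim : i ≤ i₁ := by
          by_contra hc
          exact hB i (by omega) n m hupd
        have hPi₃ :=
          Nat.findGreatest_spec (P := fun l => ∃ n' m', U (learnProc U l) = some (0, n', m'))
            hilim ⟨n, m, hupd⟩
        set i₃ := Nat.findGreatest (fun l => ∃ n' m', U (learnProc U l) = some (0, n', m')) i₁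
          with hi₃def
        have hafter : ∀ l, i₃ < l → ∀ n' m', U (learnProc U l) ≠ some (0, n', m') := by
          intro l hl n' m' hval
          by_cases hli : l ≤ i₁
          · exact Nat.findGreatest_is_greatest hl hli ⟨n', m', hval⟩
          · exact hB l (by omega) n' m' hval
        obtain ⟨n₃, m₃, hupd₃⟩ := hPi₃
        refine ⟨i₃ + 1, zeroAbove U hupd₃, fun j hj n' _ => ?_⟩
        exact goodNoUpd U hU hgs (fun l hl m' => hafter l (by omega) n' m')
      · push_neg at hA'
        exact ⟨0, fun δ hδ x => rfl,
          fun j _ n' _ => goodNoUpd U hU hgs (fun l _ m' => hA' l n' m')⟩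
  obtain ⟨start, hz0a, hgood⟩ := hstart
  -- agreement with `sj` via continuity
  have hagree : ∀ j, j ≤ k₀ →
      (∀ δ : Ordinal, 1 ≤ δ → ∀ x, learnProc U (start + j) δ x = fj U g j (δ - 1) x) →
      U (learnProc U (start + j)) = U (sj U g j) := by
    intro j hj hinv
    apply hAc2 j
    intro p hp
    rcases eq_or_ne p.1 0 with h0 | h0
    · rw [h0, sj_zero]
      exact hgood (start + j) (by omega) p.2 (hmemA j hj p hp)
    · have h1 : (1 : Ordinal) ≤ p.1 := Ordinal.one_le_iff_ne_zero.2 h0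
      rw [sj_high U g j h1 p.2, hinv p.1 h1 p.2]
  -- the simulation
  have key : ∀ j, j ≤ k₀ → ∀ δ : Ordinal, 1 ≤ δ → ∀ x,
      learnProc U (start + j) δ x = fj U g j (δ - 1) x := by
    intro j
    induction j with
    | zero =>
      intro _ δ hδ x
      show learnProc U start δ x = 0
      exact hz0a δ (Ordinal.one_le_iff_ne_zero.1 hδ) x
    | succ j ih =>
      intro hj δ hδ x
      have hjk : j < k₀ := by omega
      have ihj := ih (by omega)
      have hUeq : U (learnProc U (start + j)) = U (sj U g j) := hagree j (by omega) ihj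
      have hne := hltk j hjk
      rcases hUs : U (sj U g j) with _ | ⟨δ₀, n, m⟩
      · exact absurd (Ushift_none U g j hUs) hne
      · have hδ₀ : (1 : Ordinal) ≤ δ₀ := by
          by_contra hc
          exact hne (Ushift_low U g j δ₀ n m hUs hc)
        have hUgj : Ushift U g (fj U g j) = some (δ₀ - 1, n, m) :=
          Ushift_some U g j δ₀ n m hUs hδ₀
        have hidx : start + (j + 1) = (start + j) + 1 := rfl
        rw [hidx, learnProc_succ', hUeq, hUs, oplus_some']
        have hfj : fj U g (j + 1) = oplus (fj U g j) (some (δ₀ - 1, n, m)) := by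
          rw [fj_succ, hUgj]
        rw [hfj, oplus_some']
        have e1 : 1 + (δ - 1) = δ := Ordinal.add_sub_cancel_of_le hδ
        have e0 : 1 + (δ₀ - 1) = δ₀ := Ordinal.add_sub_cancel_of_le hδ₀
        rcases lt_trichotomy δ δ₀ with hlt' | heq' | hgt'
        · have hlt'' : δ - 1 < δ₀ - 1 := by
            have h' := hlt'
            rw [← e1, ← e0] at h'
            exact (add_lt_add_iff_left (1 : Ordinal)).1 h'
          rw [if_pos hlt', if_pos hlt'']
          exact ihj δ hδ x
        · subst heq'
          rw [if_neg (lt_irrefl δ), if_pos rfl, if_neg (lt_irrefl (δ - 1)), if_pos rfl]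
          by_cases hx : x = n
          · rw [if_pos hx, if_pos hx]
          · rw [if_neg hx, if_neg hx]
            exact ihj δ hδ x
        · have h1 : ¬ δ < δ₀ := not_lt.2 (le_of_lt hgt')
          have h2 : δ ≠ δ₀ := ne_of_gt hgt'
          have h3 : ¬ δ - 1 < δ₀ - 1 := by
            intro hc
            have := (add_lt_add_iff_left (1 : Ordinal)).2 hc
            rw [e1, e0] at this
            exact h1 this
          have h4 : δ - 1 ≠ δ₀ - 1 := by
            intro hc
            apply h2
            rw [← e1, ← e0, hc]
          rw [if_neg h1, if_neg h2, if_neg h3, if_neg h4]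
  -- the final contradiction at step k₀
  have hUeqk : U (learnProc U (start + k₀)) = U (sj U g k₀) :=
    hagree k₀ le_rfl (key k₀ le_rfl)
  rcases hUsk : U (sj U g k₀) with _ | ⟨δ, n, m⟩
  · exact hrun (start + k₀) (hUeqk.trans hUsk)
  · have hδle : ¬ (1 : Ordinal) ≤ δ := by
      intro h1
      have := (Ushift_some U g k₀ δ n m hUsk h1).symm.trans hk₀
      exact Option.some_ne_none _ this
    have hδ0 : δ = 0 := Ordinal.lt_one_iff_zero.1 (not_le.1 hδle)
    subst hδ0
    have hrunk : U (learnProc U (start + k₀)) = some (0, n, m) := hUeqk.trans hUsk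
    rcases hgs n with ⟨i₀, h₀, _⟩ | ⟨_, hnever⟩
    · exact (hU.2.2 (learnProc U i₀) (sj U g k₀) 0 n (g n) n m
        (fun γ hγ => absurd hγ (not_lt_zero (a := γ))) h₀ (sj_zero U g k₀ n) hUsk) rfl
    · exact hnever (start + k₀) m hrunk
end

section
/- Let U be an update procedure of countable ordinal α and let g be a sequence of ordinal β with β < α. Then: (1) U_g is an update procedure of ordinal α − β (it is continuous and satisfies the update condition); (2) for every function h : ℕ → ℕ (viewed as a length-one sequence), U_{g*h} = (U_g)_h as maps on sequences of ordinal α − (β + 1). -/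

lemma shiftU_none_aux (U : OSeq → Option (Ordinal × ℕ × ℕ)) (β : Ordinal)
    (g f : OSeq) (h : U (concatSeq β g f) = none) : shiftU U β g f = none := by
  unfold shiftU; rw [h]

lemma shiftU_some_aux (U : OSeq → Option (Ordinal × ℕ × ℕ)) (β : Ordinal)
    (g f : OSeq) (δ : Ordinal) (n m : ℕ) (h : U (concatSeq β g f) = some (δ, n, m)) :
    shiftU U β g f = if β ≤ δ then some (δ - β, n, m) else none := by
  unfold shiftU; rw [h]

/-- Basic facts about the shifted procedure `U_g`: (1) if `U` is an update
procedure of countable ordinal `α` and `g` is a sequence of ordinal `β < α`,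
then `U_g` is an update procedure of ordinal `α - β`; (2) for every function
`h : ℕ → ℕ` (viewed as a length-one sequence), `U_{g*h} = (U_g)_h` as maps on
sequences (of ordinal `α - (β + 1)`). -/
theorem shifted_procedure_facts (α : Ordinal)
    (hcount : α.card ≤ Cardinal.aleph0)
    (U : OSeq → Option (Ordinal × ℕ × ℕ)) (hU : IsUpdateProc α U)
    (β : Ordinal) (hβα : β < α) (g : OSeq) :
    IsUpdateProc (α - β) (shiftU U β g) ∧
    ∀ (h : ℕ → ℕ) (f : OSeq),
      shiftU U (β + 1) (concatSeq β g (fun _ => h)) f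
        = shiftU (shiftU U β g) 1 (fun _ => h) f := by

  have hβα' : β ≤ α := hβα.le
  have hsub : ∀ δ : Ordinal, β ≤ δ → (δ - β < α - β ↔ δ < α) := by
    intro δ hδ
    rw [← add_lt_add_iff_left β, Ordinal.add_sub_cancel_of_le hδ,
      Ordinal.add_sub_cancel_of_le hβα']
  constructor
  · refine ⟨?_, ?_, ?_⟩
    · intro f
      obtain ⟨A, hA1, hA2⟩ := hU.1 (concatSeq β g f)
      refine ⟨(A.filter (fun p => β ≤ p.1)).image (fun p => (p.1 - β, p.2)), ?_, ?_⟩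
      · intro p hp
        simp only [Finset.mem_image, Finset.mem_filter] at hp
        obtain ⟨q, ⟨hqA, hqβ⟩, rfl⟩ := hp
        exact (hsub q.1 hqβ).2 (hA1 q hqA)
      · intro g' hg'
        have heq : U (concatSeq β g g') = U (concatSeq β g f) := by
          apply hA2
          intro p hp
          by_cases hpb : p.1 < β
          · simp [concatSeq, hpb]
          · have hβp : β ≤ p.1 := not_lt.1 hpb
            have := hg' (p.1 - β, p.2) (by
              simp only [Finset.mem_image, Finset.mem_filter]
              exact ⟨p, ⟨hp, hβp⟩, rfl⟩)
            simpa [concatSeq, hpb] using this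
        simp only [shiftU, heq]
    · intro f γ n m hf
      simp only [shiftU] at hf
      rcases hUf : U (concatSeq β g f) with _ | ⟨δ, n', m'⟩ <;> rw [hUf] at hf
      · simp at hf
      · by_cases hβδ : β ≤ δ
        · simp only [hβδ, if_true, Option.some.injEq, Prod.mk.injEq] at hf
          obtain ⟨rfl, rfl, rfl⟩ := hf
          exact (hsub δ hβδ).2 (hU.2.1 _ _ _ _ hUf)
        · simp [hβδ] at hf
    · intro f f' γ n m i j hagree hf hval hf'
      simp only [shiftU] at hf hf'
      rcases hUf : U (concatSeq β g f) with _ | ⟨δ, n1, m1⟩ <;> rw [hUf] at hf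
      · simp at hf
      rcases hUf' : U (concatSeq β g f') with _ | ⟨δ', n2, m2⟩ <;> rw [hUf'] at hf'
      · simp at hf'
      by_cases hβδ : β ≤ δ
      swap
      · simp [hβδ] at hf
      by_cases hβδ' : β ≤ δ'
      swap
      · simp [hβδ'] at hf'
      simp only [hβδ, hβδ', if_true, Option.some.injEq, Prod.mk.injEq] at hf hf'
      obtain ⟨hδγ, rfl, rfl⟩ := hf
      obtain ⟨hδγ', rfl, rfl⟩ := hf'
      have hδ : δ = β + γ := by rw [← hδγ, Ordinal.add_sub_cancel_of_le hβδ]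
      have hδ' : δ' = β + γ := by rw [← hδγ', Ordinal.add_sub_cancel_of_le hβδ']
      subst hδ; subst hδ'
      refine hU.2.2 (concatSeq β g f) (concatSeq β g f') (β + γ) _ _ _ _ ?_ hUf ?_ hUf'
      · intro ε hε
        by_cases hεβ : ε < β
        · simp [concatSeq, hεβ]
        · have hβε : β ≤ ε := not_lt.1 hεβ
          have : ε - β < γ := by
            rwa [← add_lt_add_iff_left β, Ordinal.add_sub_cancel_of_le hβε]
          simp [concatSeq, hεβ, hagree _ this]
      · have h1 : ¬ (β + γ < β) := not_lt.2 (le_self_add (a := β) (b := γ))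
        simpa [concatSeq, h1, Ordinal.add_sub_cancel] using hval
  · intro h f
    have hseq : concatSeq (β + 1) (concatSeq β g (fun _ => h)) f
        = concatSeq β g (concatSeq 1 (fun _ => h) f) := by
      funext δ x
      simp only [concatSeq]
      rcases lt_trichotomy δ β with hlt | heq | hgt
      · rw [if_pos (hlt.trans (lt_add_one β)), if_pos hlt, if_pos hlt]
      · subst heq
        rw [if_pos (lt_add_one δ), if_neg (lt_irrefl δ), if_neg (lt_irrefl δ),
          Ordinal.sub_self, if_pos zero_lt_one]
      · have h1 : ¬ (δ < β) := not_lt.2 hgt.le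
        have h2 : ¬ (δ < β + 1) := not_lt.2 (Order.add_one_le_iff.2 hgt)
        have h3 : ¬ (δ - β < 1) := by
          rw [not_lt, Order.one_le_iff_pos, Ordinal.lt_sub, add_zero]
          exact hgt
        rw [if_neg h2, if_neg h1, if_neg h3, Ordinal.sub_sub]
    rcases hUv : U (concatSeq β g (concatSeq 1 (fun _ => h) f)) with _ | ⟨δ, n, m⟩
    · rw [shiftU_none_aux U (β + 1) _ f (by rw [hseq]; exact hUv),
        shiftU_none_aux (shiftU U β g) 1 _ f (shiftU_none_aux U β g _ hUv)]
    · have hL : shiftU U (β + 1) (concatSeq β g fun _ => h) f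
          = if β + 1 ≤ δ then some (δ - (β + 1), n, m) else none :=
        shiftU_some_aux U (β + 1) _ f δ n m (by rw [hseq]; exact hUv)
      have hV := shiftU_some_aux U β g _ δ n m hUv
      rw [hL]
      by_cases h1 : β + 1 ≤ δ
      · have hβδ : β ≤ δ := (le_self_add (a := β) (b := 1)).trans h1
        have h2 : (1 : Ordinal) ≤ δ - β := by
          rw [Order.one_le_iff_pos, Ordinal.lt_sub, add_zero]
          exact Order.add_one_le_iff.1 h1
        rw [if_pos h1, shiftU_some_aux (shiftU U β g) 1 _ f (δ - β) n m
          (by rw [hV, if_pos hβδ]), if_pos h2, Ordinal.sub_sub]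
      · by_cases hβδ : β ≤ δ
        · have h2 : ¬ (1 : Ordinal) ≤ δ - β := by
            rw [Order.one_le_iff_pos, Ordinal.lt_sub, add_zero, not_lt, ← not_lt]
            exact fun hc => h1 (Order.add_one_le_iff.2 hc)
          rw [if_neg h1, shiftU_some_aux (shiftU U β g) 1 _ f (δ - β) n m
            (by rw [hV, if_pos hβδ]), if_neg h2]
        · rw [if_neg h1,
            shiftU_none_aux (shiftU U β g) 1 _ f (by rw [hV, if_neg hβδ])]
end

section
/- Let A be a type and f : ℕ → A. Then the following two notions of convergence are equivalent: (i) for every h : ℕ → ℕ there exists x ∈ ℕ with f↓[x, h x]; (ii) for every h : ℕ → ℕ with h ≥ id there exists α : ℕ → ℕ with α ≥ id such that f↓[α z, h (α z)] for every z ∈ ℕ. -/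
/-- `f↓[n,m]`: the function `f` is constant on the interval `[n,m]`. -/
def ConvOn {A : Type*} (f : ℕ → A) (n m : ℕ) : Prop :=
  ∀ x, n ≤ x → x ≤ m → f x = f n

/-- `h ≥ id`. -/
def GeId (h : ℕ → ℕ) : Prop := ∀ x, x ≤ h x

/-- The two no-counterexample notions of convergence are equivalent:
(i) for every `h` there is `x` with `f↓[x, h x]`;
(ii) for every `h ≥ id` there is `α ≥ id` enumerating intervals
`[α z, h (α z)]` on which `f` is constant. -/
theorem convergence_notions_equivalent {A : Type*} (f : ℕ → A) :
    (∀ h : ℕ → ℕ, ∃ x : ℕ, ConvOn f x (h x)) ↔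
    (∀ h : ℕ → ℕ, GeId h →
      ∃ α : ℕ → ℕ, GeId α ∧ ∀ z : ℕ, ConvOn f (α z) (h (α z))) := by
  constructor
  · intro hyp h hge
    have key : ∀ n : ℕ, ∃ m : ℕ, n ≤ m ∧ ConvOn f m (h m) := by
      intro n
      obtain ⟨x, hx⟩ := hyp (fun x => h (max x n))
      rcases le_total n x with hnx | hxn
      · exact ⟨x, hnx, by simpa [max_eq_left hnx] using hx⟩
      · refine ⟨n, le_rfl, ?_⟩
        have hmx : max x n = n := max_eq_right hxn
        rw [hmx] at hx
        intro y hny hyh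
        have h1 : f y = f x := hx y (hxn.trans hny) hyh
        have h2 : f n = f x := hx n hxn (hge n)
        rw [h1, h2]
    choose α hα1 hα2 using key
    exact ⟨α, hα1, hα2⟩
  · intro hyp h
    obtain ⟨α, hαge, hα⟩ := hyp (fun x => max (h x) x) (fun x => le_max_right _ _)
    refine ⟨α 0, fun y hy1 hy2 => hα 0 y hy1 (hy2.trans (le_max_left _ _))⟩
end
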